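/- arXiv:1309.4141 — 4 statements merged into one kernel-verified Lean document; each statement's English description precedes it below -/
import Mathlib

section
/- Let R, ℓ, w ≥ 0 be real numbers and θ ∈ ℝ. In the Euclidean plane ℝ² with two-dimensional Lebesgue measure, let A = {(t,0) : t ∈ [0,R]} be the segment of length R along the x-axis, and let B be the image of the rectangle [−ℓ/2, ℓ/2] × [−w/2, w/2] under the rotation of ℝ² by angle θ. Then the Lebesgue measure of the Minkowski sum A ⊕ B = {a + b : a ∈ A, b ∈ B} equals R·ℓ·|sin θ| + R·w·|cos θ| + ℓ·w. -/
open MeasureTheory Real Set Pointwise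


noncomputable def rotMap (θ : ℝ) : (ℝ × ℝ) →ₗ[ℝ] (ℝ × ℝ) where
  toFun p := (p.1 * Real.cos θ - p.2 * Real.sin θ, p.1 * Real.sin θ + p.2 * Real.cos θ)
  map_add' p q := by simp [Prod.ext_iff]; constructor <;> ring
  map_smul' r p := by simp [Prod.ext_iff]; constructor <;> ring

lemma rotMap_det (θ : ℝ) : LinearMap.det (rotMap θ) = 1 := by
  rw [← LinearMap.det_toMatrix (Module.Basis.finTwoProd ℝ), Matrix.det_fin_two]
  simp [LinearMap.toMatrix_apply, rotMap]
  ring_nf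
  exact cos_sq_add_sin_sq θ

lemma image_mul_Icc_abs {a : ℝ} (s : ℝ) (ha : 0 ≤ a) :
    (fun x : ℝ => x * s) '' Icc (-a) a = Icc (-(a * |s|)) (a * |s|) := by
  rcases le_or_gt 0 s with hs | hs
  · rw [Set.image_mul_right_Icc (by linarith) hs, abs_of_nonneg hs, neg_mul]
  · have h : (fun x : ℝ => x * s) = (fun y : ℝ => -y) ∘ (fun x : ℝ => x * (-s)) := by
      funext x; simp [neg_mul_neg]
    rw [h, Set.image_comp, Set.image_mul_right_Icc (by linarith : -a ≤ a) (by linarith),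
      Set.image_neg_eq_neg, Set.neg_Icc, abs_of_neg hs]
    congr 1 <;> ring

lemma proj_image (ℓ w s c : ℝ) (hℓ : 0 ≤ ℓ) (hw : 0 ≤ w) :
    (fun p : ℝ × ℝ => p.1 * s + p.2 * c) '' (Icc (-(ℓ/2)) (ℓ/2) ×ˢ Icc (-(w/2)) (w/2))
      = Icc (-((ℓ * |s| + w * |c|)/2)) ((ℓ * |s| + w * |c|)/2) := by
  have h1 : (fun p : ℝ × ℝ => p.1 * s + p.2 * c) ''
      (Icc (-(ℓ/2)) (ℓ/2) ×ˢ Icc (-(w/2)) (w/2))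
      = Set.image2 (fun x y => x * s + y * c) (Icc (-(ℓ/2)) (ℓ/2)) (Icc (-(w/2)) (w/2)) :=
    Set.image_prod (fun x y => x * s + y * c)
  have h2 : Set.image2 (fun x y => x * s + y * c) (Icc (-(ℓ/2)) (ℓ/2)) (Icc (-(w/2)) (w/2))
      = ((fun x : ℝ => x * s) '' Icc (-(ℓ/2)) (ℓ/2)) + ((fun x : ℝ => x * c) '' Icc (-(w/2)) (w/2)) := by
    rw [← Set.image2_add, Set.image2_image_left, Set.image2_image_right]
  rw [h1, h2, image_mul_Icc_abs s (by linarith), image_mul_Icc_abs c (by linarith),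
    Set.Icc_add_Icc (neg_le_self (by positivity)) (neg_le_self (by positivity))]
  congr 1 <;> ring

/-- The area of the Minkowski sum of a segment of length `R` along the x-axis with a
rectangle of length `ℓ`, width `w`, rotated by angle `θ`, equals
`R ℓ |sin θ| + R w |cos θ| + ℓ w`. -/
theorem minkowski_sum_segment_rectangle_area
    (R ℓ w θ : ℝ) (hR : 0 ≤ R) (hℓ : 0 ≤ ℓ) (hw : 0 ≤ w) :
    volume
      (((fun t : ℝ => ((t, 0) : ℝ × ℝ)) '' Set.Icc 0 R) +
        ((fun p : ℝ × ℝ =>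
            ((p.1 * Real.cos θ - p.2 * Real.sin θ,
              p.1 * Real.sin θ + p.2 * Real.cos θ) : ℝ × ℝ)) ''
          (Set.Icc (-(ℓ / 2)) (ℓ / 2) ×ˢ Set.Icc (-(w / 2)) (w / 2)))) =
      ENNReal.ofReal (R * ℓ * |Real.sin θ| + R * w * |Real.cos θ| + ℓ * w) := by
  set H : ℝ := ℓ * |Real.sin θ| + w * |Real.cos θ| with hH
  have hH0 : 0 ≤ H := by positivity
  set rect : Set (ℝ × ℝ) := Set.Icc (-(ℓ / 2)) (ℓ / 2) ×ˢ Set.Icc (-(w / 2)) (w / 2) with hrect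
  set A : Set (ℝ × ℝ) := (fun t : ℝ => ((t, 0) : ℝ × ℝ)) '' Set.Icc 0 R with hA
  have hBrot : (fun p : ℝ × ℝ =>
      ((p.1 * Real.cos θ - p.2 * Real.sin θ,
        p.1 * Real.sin θ + p.2 * Real.cos θ) : ℝ × ℝ)) '' rect = (rotMap θ) '' rect := rfl
  set B : Set (ℝ × ℝ) := (rotMap θ) '' rect with hB
  rw [hBrot]
  -- basic facts
  have hrectC : IsCompact rect := (isCompact_Icc).prod isCompact_Icc
  have hBc : IsCompact B := hrectC.image (rotMap θ).continuous_of_finiteDimensional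
  have hAc : IsCompact A := isCompact_Icc.image (by fun_prop)
  have hSc : IsCompact (A + B) := hAc.add hBc
  have hBconv : Convex ℝ B := ((convex_Icc _ _).prod (convex_Icc _ _)).linear_image (rotMap θ)
  -- volume of B
  have hBvol : volume B = ENNReal.ofReal (ℓ * w) := by
    rw [hB, Measure.addHaar_image_linearMap, rotMap_det]
    simp only [abs_one, ENNReal.ofReal_one, one_mul]
    rw [hrect, Measure.volume_eq_prod, Measure.prod_prod, Real.volume_Icc, Real.volume_Icc,
      ← ENNReal.ofReal_mul (by linarith)]
    congr 1; ring
  -- projection of B on second coordinate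
  have hproj : Prod.snd '' B = Set.Icc (-(H/2)) (H/2) := by
    rw [hB, Set.image_image]
    have : (fun x : ℝ × ℝ => ((rotMap θ) x).2) = fun p : ℝ × ℝ => p.1 * Real.sin θ + p.2 * Real.cos θ := rfl
    rw [this, hrect, proj_image ℓ w (Real.sin θ) (Real.cos θ) hℓ hw]
  -- slices
  have hsliceS : ∀ v : ℝ, (fun u => (u, v)) ⁻¹' (A + B)
      = Set.Icc 0 R + ((fun u => (u, v)) ⁻¹' B) := by
    intro v
    ext u
    simp only [Set.mem_preimage, Set.mem_add]
    constructor
    · rintro ⟨a, ha, b, hb, hab⟩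
      obtain ⟨t, ht, rfl⟩ := ha
      obtain ⟨hu, hv⟩ := Prod.mk.injEq .. ▸ hab
      refine ⟨t, ht, b.1, ?_, hu⟩
      have : b = (b.1, v) := by rw [Prod.ext_iff]; simp [← hv]
      rwa [← this]
    · rintro ⟨t, ht, b1, hb1, rfl⟩
      exact ⟨(t, 0), ⟨t, ht, rfl⟩, (b1, v), hb1, by simp⟩
  -- pointwise slice volume
  have hpt : ∀ v : ℝ, volume ((fun u => (u, v)) ⁻¹' (A + B))
      = volume ((fun u => (u, v)) ⁻¹' B)
        + (Set.Icc (-(H/2)) (H/2)).indicator (fun _ => ENNReal.ofReal R) v := by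
    intro v
    by_cases hv : ((fun u => (u, v)) ⁻¹' B).Nonempty
    · have hvmem : v ∈ Set.Icc (-(H/2)) (H/2) := by
        obtain ⟨u, hu⟩ := hv
        rw [← hproj]
        exact ⟨(u, v), hu, rfl⟩
      have hclosed : IsClosed ((fun u : ℝ => (u, v)) ⁻¹' B) :=
        hBc.isClosed.preimage (continuous_id.prodMk continuous_const)
      have hsub : ((fun u : ℝ => (u, v)) ⁻¹' B) ⊆ Prod.fst '' B :=
        fun u hu => ⟨(u, v), hu, rfl⟩
      have hbdd : Bornology.IsBounded ((fun u : ℝ => (u, v)) ⁻¹' B) :=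
        ((hBc.image continuous_fst).isBounded).subset hsub
      have hcpt : IsCompact ((fun u : ℝ => (u, v)) ⁻¹' B) :=
        Metric.isCompact_of_isClosed_isBounded hclosed hbdd
      have hconv : Convex ℝ ((fun u : ℝ => (u, v)) ⁻¹' B) := by
        intro x hx y hy a b ha hb hab
        have h2 : a • v + b • v = v := by
          rw [smul_eq_mul, smul_eq_mul, ← add_mul, hab, one_mul]
        have : ((a • x + b • y : ℝ), v) = a • ((x, v) : ℝ × ℝ) + b • (y, v) := by
          rw [Prod.smul_mk, Prod.smul_mk, Prod.mk_add_mk, h2]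
        rw [Set.mem_preimage, this]
        exact hBconv hx hy ha hb hab
      set p := sInf ((fun u : ℝ => (u, v)) ⁻¹' B) with hp
      set q := sSup ((fun u : ℝ => (u, v)) ⁻¹' B) with hq
      have hmemp : p ∈ ((fun u : ℝ => (u, v)) ⁻¹' B) := hcpt.sInf_mem hv
      have hmemq : q ∈ ((fun u : ℝ => (u, v)) ⁻¹' B) := hcpt.sSup_mem hv
      have hIcc : ((fun u : ℝ => (u, v)) ⁻¹' B) = Set.Icc p q := by
        apply Set.Subset.antisymm
        · exact fun x hx => ⟨csInf_le hcpt.bddBelow hx, le_csSup hcpt.bddAbove hx⟩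
        · exact hconv.ordConnected.out hmemp hmemq
      have hpq : p ≤ q := csInf_le_csSup hv hcpt.bddBelow hcpt.bddAbove
      rw [hsliceS v, hIcc, Set.Icc_add_Icc hR hpq, Real.volume_Icc, Real.volume_Icc,
        Set.indicator_of_mem hvmem, ← ENNReal.ofReal_add (by linarith) hR]
      congr 1; ring
    · rw [Set.not_nonempty_iff_eq_empty] at hv
      have hvnot : v ∉ Set.Icc (-(H/2)) (H/2) := by
        intro hmem
        rw [← hproj] at hmem
        obtain ⟨b, hb, hb2⟩ := hmem
        have : b.1 ∈ (fun u : ℝ => (u, v)) ⁻¹' B := by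
          simp only [Set.mem_preimage]
          rwa [show ((b.1, v) : ℝ × ℝ) = b by rw [Prod.ext_iff]; exact ⟨rfl, hb2.symm⟩]
        rw [hv] at this; exact this
      rw [hsliceS v, hv, Set.add_empty, Set.indicator_of_notMem hvnot]
      simp
  -- Fubini
  have hmeasS : MeasurableSet (A + B) := hSc.measurableSet
  rw [Measure.volume_eq_prod, Measure.prod_apply_symm hmeasS]
  calc ∫⁻ v, volume ((fun u => (u, v)) ⁻¹' (A + B))
      = ∫⁻ v, (volume ((fun u => (u, v)) ⁻¹' B)
          + (Set.Icc (-(H/2)) (H/2)).indicator (fun _ => ENNReal.ofReal R) v) := by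
        exact lintegral_congr hpt
    _ = (∫⁻ v, volume ((fun u => (u, v)) ⁻¹' B))
          + ∫⁻ v, (Set.Icc (-(H/2)) (H/2)).indicator (fun _ => ENNReal.ofReal R) v := by
        rw [lintegral_add_left (measurable_measure_prodMk_right hBc.measurableSet)]
    _ = volume B + ENNReal.ofReal R * volume (Set.Icc (-(H/2)) (H/2)) := by
        rw [← Measure.prod_apply_symm hBc.measurableSet, ← Measure.volume_eq_prod,
          lintegral_indicator measurableSet_Icc]
        simp [mul_comm]
    _ = ENNReal.ofReal (R * ℓ * |Real.sin θ| + R * w * |Real.cos θ| + ℓ * w) := by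
        rw [hBvol, Real.volume_Icc, show H/2 - -(H/2) = H by ring, ← ENNReal.ofReal_mul hR,
          ← ENNReal.ofReal_add (by positivity) (mul_nonneg hR hH0)]
        congr 1
        rw [hH]; ring
end

section
/- Let B be a nonempty compact convex subset of ℝ², let R ≥ 0, and let e, f be orthonormal vectors in ℝ². Let A = {t • e : t ∈ [0,R]} be the segment of length R in direction e. Then the two-dimensional Lebesgue measure of the Minkowski sum A ⊕ B equals the two-dimensional Lebesgue measure of B plus R times the one-dimensional Lebesgue measure of the set {⟪x, f⟫ : x ∈ B} ⊆ ℝ (the projection of B onto the direction orthogonal to e). -/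
open MeasureTheory Set Pointwise RealInnerProductSpace

/-- Area of the sum of a vertical-direction segment `{0} ×ˢ [0,R]` with a compact convex
set `K ⊆ ℝ × ℝ`: Fubini over the first coordinate, each slice being an interval extended
by length `R`. -/
lemma minkowski_core_lemma (K : Set (ℝ × ℝ)) (hK : IsCompact K) (hKconv : Convex ℝ K)
    (R : ℝ) (hR : 0 ≤ R) :
    volume (({(0:ℝ)} ×ˢ Icc 0 R) + K) =
      volume K + ENNReal.ofReal R * volume (Prod.fst '' K) := by
  have hScompact : IsCompact (({(0:ℝ)} ×ˢ Icc 0 R) + K) :=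
    (isCompact_singleton.prod isCompact_Icc).add hK
  have hKm : MeasurableSet K := hK.measurableSet
  have hP : IsCompact (Prod.fst '' K) := hK.image continuous_fst
  have hPm : MeasurableSet (Prod.fst '' K) := hP.measurableSet
  have hslice : ∀ x : ℝ, Prod.mk x ⁻¹' (({(0:ℝ)} ×ˢ Icc 0 R) + K)
      = Icc 0 R + (Prod.mk x ⁻¹' K) := by
    intro x
    ext y
    simp only [mem_preimage, Set.mem_add, Set.mem_prod, mem_singleton_iff, Prod.exists,
      Prod.mk_add_mk, Prod.mk.injEq]
    constructor
    · rintro ⟨a, b, ⟨rfl, hb⟩, c, d, hcd, hcx, hby⟩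
      rw [zero_add] at hcx
      subst hcx
      exact ⟨b, hb, d, hcd, hby⟩
    · rintro ⟨b, hb, d, hd, hby⟩
      exact ⟨0, b, ⟨rfl, hb⟩, x, d, hd, zero_add x, hby⟩
  have hvol_slice : ∀ x : ℝ, volume (Prod.mk x ⁻¹' (({(0:ℝ)} ×ˢ Icc 0 R) + K))
      = (Prod.fst '' K).indicator (fun _ => ENNReal.ofReal R) x + volume (Prod.mk x ⁻¹' K) := by
    intro x
    by_cases hx : x ∈ Prod.fst '' K
    · -- slice nonempty
      have hne : (Prod.mk x ⁻¹' K).Nonempty := by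
        obtain ⟨⟨u, v⟩, huv, h1⟩ := hx
        exact ⟨v, by simpa [← h1] using huv⟩
      have hcx : IsCompact (Prod.mk x ⁻¹' K) := by
        refine IsCompact.of_isClosed_subset (hK.image continuous_snd)
          (hK.isClosed.preimage (Continuous.prodMk_right x)) ?_
        rintro y hy
        exact ⟨(x, y), hy, rfl⟩
      have hconvx : Convex ℝ (Prod.mk x ⁻¹' K) := by
        intro y hy z hz a b ha hb hab
        have := hKconv hy hz ha hb hab
        simpa [Prod.smul_mk, Prod.mk_add_mk, smul_eq_mul, ← add_mul, hab] using this
      have heq : Prod.mk x ⁻¹' K = Icc (sInf (Prod.mk x ⁻¹' K)) (sSup (Prod.mk x ⁻¹' K)) :=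
        eq_Icc_of_connected_compact ⟨hne, hconvx.isPreconnected⟩ hcx
      have hab : sInf (Prod.mk x ⁻¹' K) ≤ sSup (Prod.mk x ⁻¹' K) := by
        rw [heq] at hne
        exact nonempty_Icc.mp hne
      rw [hslice, heq, Set.Icc_add_Icc hR hab, Real.volume_Icc, Real.volume_Icc,
        indicator_of_mem hx]
      rw [show R + sSup (Prod.mk x ⁻¹' K) - (0 + sInf (Prod.mk x ⁻¹' K))
        = R + (sSup (Prod.mk x ⁻¹' K) - sInf (Prod.mk x ⁻¹' K)) by ring]
      rw [ENNReal.ofReal_add hR (sub_nonneg.mpr hab)]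
    · have hempty : Prod.mk x ⁻¹' K = ∅ := by
        ext y
        simp only [mem_preimage, mem_empty_iff_false, iff_false]
        intro h
        exact hx ⟨(x, y), h, rfl⟩
      rw [hslice, hempty, Set.add_empty, indicator_of_notMem hx, measure_empty]
      simp
  calc volume (({(0:ℝ)} ×ˢ Icc 0 R) + K)
      = ∫⁻ x, volume (Prod.mk x ⁻¹' (({(0:ℝ)} ×ˢ Icc 0 R) + K)) := by
        rw [Measure.volume_eq_prod, Measure.prod_apply hScompact.measurableSet]
    _ = ∫⁻ x, ((Prod.fst '' K).indicator (fun _ => ENNReal.ofReal R) x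
          + volume (Prod.mk x ⁻¹' K)) := lintegral_congr hvol_slice
    _ = (∫⁻ x, (Prod.fst '' K).indicator (fun _ => ENNReal.ofReal R) x)
          + ∫⁻ x, volume (Prod.mk x ⁻¹' K) :=
        lintegral_add_left (measurable_const.indicator hPm) _
    _ = ENNReal.ofReal R * volume (Prod.fst '' K) + volume K := by
        rw [lintegral_indicator hPm, setLIntegral_const,
          show (∫⁻ x, volume (Prod.mk x ⁻¹' K)) = volume K by
            rw [Measure.volume_eq_prod, Measure.prod_apply hKm]]
    _ = volume K + ENNReal.ofReal R * volume (Prod.fst '' K) := add_comm _ _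

/-- For a nonempty compact convex set `B ⊆ ℝ²` and a segment `A` of length `R` in the
direction of a unit vector `e`, the area of the Minkowski sum `A ⊕ B` equals the area of
`B` plus `R` times the length of the projection of `B` onto the orthogonal direction `f`. -/
theorem minkowski_sum_segment_convex_area
    (B : Set (EuclideanSpace ℝ (Fin 2))) (hBne : B.Nonempty) (hBc : IsCompact B)
    (hBconv : Convex ℝ B) (R : ℝ) (hR : 0 ≤ R)
    (e f : EuclideanSpace ℝ (Fin 2)) (he : ‖e‖ = 1) (hf : ‖f‖ = 1)
    (hef : ⟪e, f⟫ = 0) :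
    volume (((fun t : ℝ => t • e) '' Set.Icc 0 R) + B) =
      volume B + ENNReal.ofReal R * volume ((fun x => ⟪x, f⟫) '' B) := by
  -- basic inner-product facts
  have hff : ⟪f, f⟫ = (1:ℝ) := by rw [real_inner_self_eq_norm_mul_norm, hf]; norm_num
  have hee : ⟪e, e⟫ = (1:ℝ) := by rw [real_inner_self_eq_norm_mul_norm, he]; norm_num
  have hfe : ⟪f, e⟫ = (0:ℝ) := by rw [real_inner_comm]; exact hef
  -- `![f, e]` is an orthonormal basis
  have hv : Orthonormal ℝ ![f, e] := by
    rw [orthonormal_iff_ite]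
    intro i j
    fin_cases i <;> fin_cases j <;>
      simp only [Matrix.cons_val_zero, Matrix.cons_val_one, Matrix.head_cons] <;>
      norm_num [hff, hee, hfe, hef, hf, he]
  have hcard : Fintype.card (Fin 2) = Module.finrank ℝ (EuclideanSpace ℝ (Fin 2)) := by
    simp
  let b := basisOfLinearIndependentOfCardEqFinrank hv.linearIndependent hcard
  have hb : ⇑b = ![f, e] := coe_basisOfLinearIndependentOfCardEqFinrank _ _
  let ob : OrthonormalBasis (Fin 2) ℝ (EuclideanSpace ℝ (Fin 2)) :=
    b.toOrthonormalBasis (by rwa [hb])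
  have hob : ⇑ob = ![f, e] := by rw [Module.Basis.coe_toOrthonormalBasis, hb]
  -- the measure-preserving coordinate map
  let Φ : EuclideanSpace ℝ (Fin 2) ≃ᵐ ℝ × ℝ :=
    (ob.measurableEquiv.trans (MeasurableEquiv.toLp 2 (Fin 2 → ℝ)).symm).trans
      MeasurableEquiv.finTwoArrow
  have hΦ : MeasurePreserving Φ volume volume :=
    (volume_preserving_finTwoArrow ℝ).comp
      ((EuclideanSpace.volume_preserving_symm_measurableEquiv_toLp (Fin 2)).comp
        ob.measurePreserving_measurableEquiv)
  have hΦapp : ∀ x, Φ x = (⟪x, f⟫, ⟪x, e⟫) := by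
    intro x
    calc Φ x = (ob.repr x 0, ob.repr x 1) := rfl
      _ = (⟪x, f⟫, ⟪x, e⟫) := by
          rw [ob.repr_apply_apply, ob.repr_apply_apply, hob]
          simp only [Matrix.cons_val_zero, Matrix.cons_val_one, Matrix.head_cons]
          rw [real_inner_comm f x, real_inner_comm e x]
  have hΦaddmap : ∀ x y, Φ (x + y) = Φ x + Φ y := by
    intro x y
    simp [hΦapp, inner_add_left, Prod.mk_add_mk]
  have hΦcont : Continuous Φ := by
    have : ⇑Φ = fun x => (⟪x, f⟫, ⟪x, e⟫) := funext hΦapp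
    rw [this]
    exact (continuous_id.inner continuous_const).prodMk
      (continuous_id.inner continuous_const)
  -- measure of images under Φ
  have himg : ∀ s : Set (EuclideanSpace ℝ (Fin 2)), MeasurableSet s →
      volume (Φ '' s) = volume s := by
    intro s hs
    rw [MeasurableEquiv.image_eq_preimage_symm]
    exact (hΦ.symm Φ).measure_preimage hs.nullMeasurableSet
  -- Φ maps Minkowski sums to Minkowski sums
  have hadd : ∀ s t : Set (EuclideanSpace ℝ (Fin 2)), Φ '' (s + t) = Φ '' s + Φ '' t := by
    intro s t
    ext z
    simp only [Set.mem_image, Set.mem_add]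
    constructor
    · rintro ⟨w, ⟨a, ha, c, hc, rfl⟩, rfl⟩
      exact ⟨Φ a, ⟨a, ha, rfl⟩, Φ c, ⟨c, hc, rfl⟩, (hΦaddmap a c).symm⟩
    · rintro ⟨p, ⟨a, ha, rfl⟩, q, ⟨c, hc, rfl⟩, rfl⟩
      exact ⟨a + c, ⟨a, ha, c, hc, rfl⟩, hΦaddmap a c⟩
  -- the image of the segment
  have hsegA : Φ '' ((fun t : ℝ => t • e) '' Set.Icc 0 R) = ({(0:ℝ)} ×ˢ Icc 0 R) := by
    rw [Set.image_image]
    have h1 : ∀ t : ℝ, Φ (t • e) = ((0:ℝ), t) := by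
      intro t
      rw [hΦapp]
      simp only [real_inner_smul_left, hef, hee, mul_zero, mul_one]
    simp only [h1]
    ext ⟨a, c⟩
    simp only [Set.mem_image, Set.mem_prod, mem_singleton_iff, Prod.mk.injEq]
    constructor
    · rintro ⟨t, ht, rfl, rfl⟩; exact ⟨rfl, ht⟩
    · rintro ⟨rfl, hc⟩; exact ⟨c, hc, rfl, rfl⟩
  -- the image of B is compact convex
  have hKcomp : IsCompact (Φ '' B) := hBc.image hΦcont
  have hKconv : Convex ℝ (Φ '' B) := by
    rintro _ ⟨x, hx, rfl⟩ _ ⟨y, hy, rfl⟩ a c ha hc hac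
    refine ⟨a • x + c • y, hBconv hx hy ha hc hac, ?_⟩
    simp only [hΦapp, inner_add_left, real_inner_smul_left, Prod.smul_mk,
      smul_eq_mul, Prod.mk_add_mk]
  -- projection of the image
  have hproj : Prod.fst '' (Φ '' B) = (fun x => ⟪x, f⟫) '' B := by
    rw [Set.image_image]
    exact Set.image_congr fun x _ => by rw [hΦapp]
  -- assemble
  have hAcomp : IsCompact ((fun t : ℝ => t • e) '' Set.Icc 0 R) :=
    isCompact_Icc.image (continuous_id.smul continuous_const)
  calc volume (((fun t : ℝ => t • e) '' Set.Icc 0 R) + B)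
      = volume (Φ '' (((fun t : ℝ => t • e) '' Set.Icc 0 R) + B)) :=
        (himg _ (hAcomp.add hBc).measurableSet).symm
    _ = volume (({(0:ℝ)} ×ˢ Icc 0 R) + Φ '' B) := by rw [hadd, hsegA]
    _ = volume (Φ '' B) + ENNReal.ofReal R * volume (Prod.fst '' (Φ '' B)) :=
        minkowski_core_lemma _ hKcomp hKconv R hR
    _ = volume B + ENNReal.ofReal R * volume ((fun x => ⟪x, f⟫) '' B) := by
        rw [himg B hBc.measurableSet, hproj]
end

section
/- Let c ≥ 0, κ > 0 and t ≥ 0 be real numbers. Then e^{−c} + ∫₀^{∞} e^{−t x} · ( Σ_{m=0}^{∞} e^{−(c + κ x)} · c^{m+1} · κ^{m+1} · x^m / (m! · (m+1)!) ) dx = exp( c · ( κ/(κ + t) − 1 ) ). -/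
open MeasureTheory Real

lemma integrableOn_exp_neg_mul_pow {b : ℝ} (hb : 0 < b) (m : ℕ) :
    MeasureTheory.IntegrableOn (fun x : ℝ => Real.exp (-(b * x)) * x ^ m) (Set.Ioi 0) := by
  have h1 : MeasureTheory.IntegrableOn (fun x : ℝ => Real.exp (-x) * x ^ m) (Set.Ioi 0) := by
    have h := Real.GammaIntegral_convergent (s := (m + 1 : ℝ)) (by positivity)
    refine h.congr_fun (fun x hx => ?_) measurableSet_Ioi
    simp only [add_sub_cancel_right, Real.rpow_natCast]
  have h2 := (MeasureTheory.integrableOn_Ioi_comp_mul_left_iff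
      (fun x : ℝ => Real.exp (-x) * x ^ m) 0 hb).mpr (by simpa using h1)
  have h3 : MeasureTheory.IntegrableOn
      (fun x : ℝ => ((b : ℝ) ^ m)⁻¹ * (Real.exp (-(b * x)) * (b * x) ^ m)) (Set.Ioi 0) :=
    h2.const_mul ((b : ℝ) ^ m)⁻¹
  refine MeasureTheory.IntegrableOn.congr_fun h3 (fun x hx => ?_) measurableSet_Ioi
  have hbm : (b : ℝ) ^ m ≠ 0 := by positivity
  rw [mul_pow]
  field_simp

lemma integral_exp_neg_mul_pow {b : ℝ} (hb : 0 < b) (m : ℕ) :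
    ∫ x in Set.Ioi (0:ℝ), Real.exp (-(b * x)) * x ^ m = m.factorial / b ^ (m + 1) := by
  calc ∫ x in Set.Ioi (0:ℝ), Real.exp (-(b*x)) * x ^ m
      = ∫ x in Set.Ioi (0:ℝ), x ^ ((m : ℝ) + 1 - 1) * Real.exp (-(b*x)) := by
        refine setIntegral_congr_fun measurableSet_Ioi fun x hx => ?_
        rw [add_sub_cancel_right, Real.rpow_natCast, mul_comm]
    _ = (1/b) ^ ((m : ℝ) + 1) * Real.Gamma ((m : ℝ) + 1) :=
        Real.integral_rpow_mul_exp_neg_mul_Ioi (by positivity) hb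
    _ = m.factorial / b ^ (m+1) := by
        rw [Real.Gamma_nat_eq_factorial, show ((m:ℝ)+1) = ((m+1:ℕ):ℝ) by push_cast; ring,
          Real.rpow_natCast, one_div, inv_pow, inv_mul_eq_div]

/-- The Laplace transform of the mixed distribution consisting of an atom of mass `e^{-c}`
at `0` together with the density
`x ↦ Σ_m e^{-(c + κ x)} c^{m+1} κ^{m+1} x^m / (m! (m+1)!)` on `(0,∞)`
equals `exp (c (κ/(κ+t) - 1))`. -/
theorem laplace_transform_uniform_loss (c κ t : ℝ) (hc : 0 ≤ c) (hκ : 0 < κ) (ht : 0 ≤ t) :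
    Real.exp (-c) +
        ∫ x in Set.Ioi (0 : ℝ),
          Real.exp (-t * x) *
            ∑' m : ℕ,
              Real.exp (-(c + κ * x)) * c ^ (m + 1) * κ ^ (m + 1) * x ^ m /
                (m.factorial * (m + 1).factorial) =
      Real.exp (c * (κ / (κ + t) - 1)) := by
  have hb : 0 < κ + t := by positivity
  set b : ℝ := κ + t with hb_def
  set a : ℝ := c * κ / b with ha_def
  have ha : 0 ≤ a := by positivity
  -- constants and summands
  have hfac : ∀ m : ℕ, ((m.factorial : ℝ)) ≠ 0 :=
    fun m => Nat.cast_ne_zero.mpr m.factorial_ne_zero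
  set C : ℕ → ℝ := fun m => Real.exp (-c) * c ^ (m+1) * κ ^ (m+1) /
      (m.factorial * (m+1).factorial) with hC_def
  set F : ℕ → ℝ → ℝ := fun m x => C m * (Real.exp (-(b * x)) * x ^ m) with hF_def
  have hC_nonneg : ∀ m, 0 ≤ C m := by
    intro m
    rw [hC_def]
    positivity
  have hInt : ∀ m, MeasureTheory.Integrable (F m)
      (MeasureTheory.volume.restrict (Set.Ioi (0:ℝ))) := by
    intro m
    exact (integrableOn_exp_neg_mul_pow hb m).const_mul (C m)
  have hIntVal : ∀ m, ∫ x in Set.Ioi (0:ℝ), F m x = Real.exp (-c) * (a ^ (m+1) / (m+1).factorial) := by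
    intro m
    rw [hF_def]
    simp only
    rw [MeasureTheory.integral_const_mul, integral_exp_neg_mul_pow hb m, hC_def, ha_def,
      div_pow, mul_pow]
    have h1 := hfac m
    have h2 := hfac (m+1)
    have h3 : b ^ (m+1) ≠ 0 := by positivity
    field_simp
  -- shifted exponential series
  have hexp : HasSum (fun n : ℕ => a ^ n / n.factorial) (Real.exp a) := by
    rw [Real.exp_eq_exp_ℝ]
    exact NormedSpace.expSeries_div_hasSum_exp a
  have hshift : HasSum (fun m : ℕ => a ^ (m+1) / (m+1).factorial) (Real.exp a - 1) := by
    have := (hasSum_nat_add_iff' (f := fun n : ℕ => a ^ n / n.factorial) 1).mpr hexp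
    simpa using this
  have hSumVal : Summable fun m : ℕ => Real.exp (-c) * (a ^ (m+1) / (m+1).factorial) :=
    (hshift.mul_left _).summable
  have hNorm : ∀ m : ℕ, (∫ x in Set.Ioi (0:ℝ), ‖F m x‖) = ∫ x in Set.Ioi (0:ℝ), F m x := by
    intro m
    refine setIntegral_congr_fun measurableSet_Ioi fun x hx => ?_
    have hx0 : (0:ℝ) < x := hx
    have := hC_nonneg m
    rw [Real.norm_of_nonneg (by positivity)]
  have hSum : Summable fun m : ℕ => ∫ x in Set.Ioi (0:ℝ), ‖F m x‖ := by
    have : (fun m : ℕ => ∫ x in Set.Ioi (0:ℝ), ‖F m x‖)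
        = fun m => Real.exp (-c) * (a ^ (m+1) / (m+1).factorial) := by
      funext m; rw [hNorm m, hIntVal m]
    rw [this]
    exact hSumVal
  -- rewrite integrand as a tsum of F
  have key : Set.EqOn
      (fun x : ℝ => Real.exp (-t * x) *
        ∑' m : ℕ, Real.exp (-(c + κ * x)) * c ^ (m + 1) * κ ^ (m + 1) * x ^ m /
          (m.factorial * (m + 1).factorial))
      (fun x : ℝ => ∑' m : ℕ, F m x) (Set.Ioi 0) := by
    intro x hx
    simp only
    rw [← tsum_mul_left]
    refine tsum_congr fun m => ?_
    rw [hF_def, hC_def]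
    simp only
    have hsplit : Real.exp (-t * x) * Real.exp (-(c + κ * x))
        = Real.exp (-c) * Real.exp (-(b * x)) := by
      rw [← Real.exp_add, ← Real.exp_add, hb_def]
      ring_nf
    calc Real.exp (-t * x) * (Real.exp (-(c + κ * x)) * c ^ (m + 1) * κ ^ (m + 1) * x ^ m /
          (m.factorial * (m + 1).factorial))
        = (Real.exp (-t * x) * Real.exp (-(c + κ * x))) * (c ^ (m + 1) * κ ^ (m + 1) * x ^ m /
          (m.factorial * (m + 1).factorial)) := by ring
      _ = (Real.exp (-c) * Real.exp (-(b * x))) * (c ^ (m + 1) * κ ^ (m + 1) * x ^ m /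
          (m.factorial * (m + 1).factorial)) := by rw [hsplit]
      _ = Real.exp (-c) * c ^ (m + 1) * κ ^ (m + 1) / (m.factorial * (m + 1).factorial) *
          (Real.exp (-(b * x)) * x ^ m) := by ring
  rw [setIntegral_congr_fun measurableSet_Ioi key,
    ← MeasureTheory.integral_tsum_of_summable_integral_norm hInt hSum]
  have htsum : ∑' m : ℕ, ∫ x in Set.Ioi (0:ℝ), F m x = Real.exp (-c) * (Real.exp a - 1) := by
    rw [tsum_congr hIntVal]
    exact (hshift.mul_left _).tsum_eq
  rw [htsum]
  have hcollect : Real.exp (-c) + Real.exp (-c) * (Real.exp a - 1)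
      = Real.exp (-c) * Real.exp a := by ring
  rw [hcollect, ← Real.exp_add]
  congr 1
  have hbne : b ≠ 0 := ne_of_gt hb
  rw [ha_def]
  field_simp
  ring
end

section
/- Let β > 0, p ≥ 0, μ ≥ 0 and x > 0 be real numbers, and define U(x) = (e^{−p}/β²) · (1 − (βx + 1)e^{−βx}). Then Σ_{i=0}^{∞} ( ∫₀^{x} (1 − e^{−(βt + p)}) · (2t/x²) dt )^i · e^{−μπx²} (μπx²)^i / i! = exp(−2πμ · U(x)). -/
open MeasureTheory Real

lemma nvbd_integral (β p x : ℝ) (hβ : 0 < β) (hx : 0 < x) :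
    (∫ t in (0 : ℝ)..x, (1 - Real.exp (-(β * t + p))) * (2 * t / x ^ 2))
      = 1 - 2 / x ^ 2 *
        (Real.exp (-p) / β ^ 2 * (1 - (β * x + 1) * Real.exp (-(β * x)))) := by
  have hx2 : (x : ℝ) ^ 2 ≠ 0 := pow_ne_zero 2 hx.ne'
  have hβ2 : (β : ℝ) ^ 2 ≠ 0 := pow_ne_zero 2 hβ.ne'
  have key : ∀ t ∈ Set.uIcc (0 : ℝ) x, HasDerivAt
      (fun t : ℝ => t ^ 2 / x ^ 2 +
        2 * Real.exp (-p) / x ^ 2 * ((t / β + 1 / β ^ 2) * Real.exp (-(β * t))))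
      ((1 - Real.exp (-(β * t + p))) * (2 * t / x ^ 2)) t := by
    intro t _
    have h1 : HasDerivAt (fun t : ℝ => t ^ 2 / x ^ 2) (2 * t / x ^ 2) t := by
      have := (hasDerivAt_pow 2 t).div_const (x ^ 2)
      simpa [mul_comm] using this
    have he : HasDerivAt (fun t : ℝ => Real.exp (-(β * t))) (-β * Real.exp (-(β * t))) t := by
      have h := (Real.hasDerivAt_exp (-(β * t))).comp t
        (((hasDerivAt_id t).const_mul β).neg)
      simpa [mul_comm, Function.comp_def] using h
    have hl : HasDerivAt (fun t : ℝ => t / β + 1 / β ^ 2) (1 / β) t := by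
      exact ((hasDerivAt_id t).div_const β).add_const (1 / β ^ 2)
    have h2 := ((hl.mul he).const_mul (2 * Real.exp (-p) / x ^ 2))
    have := h1.add h2
    convert this using 1
    on_goal 1 => rfl
    on_goal 1 => rfl
    on_goal 1 => rfl
    have : Real.exp (-(β * t + p)) = Real.exp (-(β * t)) * Real.exp (-p) := by
      rw [← Real.exp_add]; ring_nf
    rw [this]
    field_simp
    ring
  rw [intervalIntegral.integral_eq_sub_of_hasDerivAt key
    (Continuous.intervalIntegrable (by continuity) _ _)]
  simp only [mul_zero, neg_zero, Real.exp_zero]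
  field_simp
  ring

/-- The nearest-visible-base-station distance computation: with
`U x = (e^{-p}/β²)(1 - (βx+1)e^{-βx})`,
`Σ_i (∫₀^x (1 - e^{-(βt+p)})(2t/x²) dt)^i e^{-μπx²}(μπx²)^i / i! = exp (-2πμ U x)`. -/
theorem nearest_visible_bs_distance (β p μ x : ℝ) (hβ : 0 < β) (hp : 0 ≤ p)
    (hμ : 0 ≤ μ) (hx : 0 < x) :
    ∑' i : ℕ,
        (∫ t in (0 : ℝ)..x, (1 - Real.exp (-(β * t + p))) * (2 * t / x ^ 2)) ^ i *
          (Real.exp (-(μ * π * x ^ 2)) * (μ * π * x ^ 2) ^ i / i.factorial) =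
      Real.exp (-(2 * π * μ *
        (Real.exp (-p) / β ^ 2 * (1 - (β * x + 1) * Real.exp (-(β * x)))))) := by
  have hx2 : (x : ℝ) ^ 2 ≠ 0 := pow_ne_zero 2 hx.ne'
  rw [nvbd_integral β p x hβ hx]
  set c : ℝ := Real.exp (-p) / β ^ 2 * (1 - (β * x + 1) * Real.exp (-(β * x))) with hc
  set a : ℝ := 1 - 2 / x ^ 2 * c with ha
  set lam : ℝ := μ * π * x ^ 2 with hlam
  have h1 : ∀ (a E L F : ℝ) (i : ℕ), a ^ i * (E * L ^ i / F)
      = E * ((a * L) ^ i / F) := by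
    intros; rw [mul_pow]; ring
  simp_rw [h1 a (Real.exp (-lam)) lam]
  rw [tsum_mul_left]
  have h2 : ∑' i : ℕ, (a * lam) ^ i / (i.factorial : ℝ) = Real.exp (a * lam) := by
    rw [Real.exp_eq_exp_ℝ, NormedSpace.exp_eq_tsum_div]
  rw [h2, ← Real.exp_add]
  congr 1
  rw [hlam, ha]
  field_simp
  ring
end
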